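/- arXiv:2307.13201 — 2 statements merged into one kernel-verified Lean document; each statement's English description precedes it below -/
import Mathlib

section
/- Let C be a Grothendieck category with projective generator G, (U,θ,η) a monad on C with U exact and colimit-preserving, and (M, f_M) a U-module. For every morphism x : G → M in C there exists a U-submodule N_x ⊆ M in EM_U such that |C(G,N_x)| ≤ λ^U and x factors through the inclusion N_x ↪ M. -/
open CategoryTheory CategoryTheory.Limits Opposite

universe w v u u₂ v₂

namespace Paper

variable {C : Type u} [Category.{v} C]

/-- A partially ordered set `J` is `κ`-directed if every subset of cardinality `< κ`
has an upper bound. -/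
def IsKappaDirected (κ : Cardinal.{v}) (J : Type v) [Preorder J] : Prop :=
  ∀ S : Set J, Cardinal.mk S < κ → ∃ j : J, ∀ s ∈ S, s ≤ j

/-- An object `M` is `κ`-presentable if `C(M,-)` preserves colimits of
`κ`-directed diagrams. -/
def IsPresentable (κ : Cardinal.{v}) (M : C) : Prop :=
  ∀ (J : Type v) [PartialOrder J], IsKappaDirected κ J →
    PreservesColimitsOfShape J (coyoneda.obj (op M))

/-- A category is locally `κ`-presentable if it is cocomplete and has a small
separating family of `κ`-presentable objects. -/
def IsLocallyKappaPresentable (κ : Cardinal.{v₂}) (A : Type u₂) [Category.{v₂} A] : Prop :=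
  ∃ (_ : HasColimits A) (S : Set A), Small.{v₂} S ∧ (∀ M ∈ S, IsPresentable κ M) ∧
    ObjectProperty.IsSeparating (fun M => M ∈ S)

/-- A category is locally presentable if it is locally `κ`-presentable for some
regular cardinal `κ`. -/
def IsLocallyPresentable (A : Type u₂) [Category.{v₂} A] : Prop :=
  ∃ κ : Cardinal.{v₂}, κ.IsRegular ∧ IsLocallyKappaPresentable κ A

/-- Filtered colimits exist when all colimits do. -/
def hasFilteredOfHasColimits {A : Type u₂} [Category.{v₂} A] (hc : HasColimits A) :
    HasFilteredColimits A :=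
  ⟨fun I _ _ => hc.has_colimits_of_shape I⟩

/-- A Grothendieck category: abelian, cocomplete, AB5, with a generator. -/
def IsGrothendieckCategory (A : Type u₂) [Category.{v₂} A] : Prop :=
  ∃ (_ : Abelian A) (hc : HasColimits A),
    @AB5 A _ (hasFilteredOfHasColimits hc) ∧ ∃ G : A, IsSeparator G

section MonadQuiver

variable {Q : Type v} [SmallCategory Q] (𝒰 : Q ⥤ Monad C)

/-- A module over a monad quiver `𝒰 : Q ⥤ Mnd(C)`: a family of Eilenberg-Moore
algebras `pt x ∈ EM_{𝒰 x}` together with compatible structure morphisms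
`pt x ⟶ (𝒰 φ)_* (pt y)` for each arrow `φ : x ⟶ y`. -/
structure UMod where
  pt : ∀ x : Q, (𝒰.obj x).Algebra
  tr : ∀ {x y : Q}, (x ⟶ y) → ((pt x).A ⟶ (pt y).A)
  compat : ∀ {x y : Q} (φ : x ⟶ y),
    (𝒰.obj x).toFunctor.map (tr φ) ≫ ((𝒰.map φ).app (pt y).A ≫ (pt y).a) =
      (pt x).a ≫ tr φ
  tr_id : ∀ x : Q, tr (𝟙 x) = 𝟙 (pt x).A
  tr_comp : ∀ {x y z : Q} (φ : x ⟶ y) (ψ : y ⟶ z), tr (φ ≫ ψ) = tr φ ≫ tr ψ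

variable {𝒰}

/-- Morphisms of modules over a monad quiver. -/
structure UModHom (M N : UMod 𝒰) where
  app : ∀ x : Q, (M.pt x).A ⟶ (N.pt x).A
  halg : ∀ x : Q,
    (𝒰.obj x).toFunctor.map (app x) ≫ (N.pt x).a = (M.pt x).a ≫ app x
  hcomm : ∀ {x y : Q} (φ : x ⟶ y), M.tr φ ≫ app y = app x ≫ N.tr φ

theorem UModHom.ext' {M N : UMod 𝒰} {f g : UModHom M N} (h : f.app = g.app) : f = g := by
  cases f; cases g; cases h; rfl

instance : Category (UMod 𝒰) where
  Hom := UModHom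
  id M :=
    { app := fun x => 𝟙 _
      halg := fun x => by simp
      hcomm := fun φ => by simp }
  comp {M N P} f g :=
    { app := fun x => f.app x ≫ g.app x
      halg := fun x => by
        rw [Functor.map_comp, Category.assoc, g.halg x, ← Category.assoc, f.halg x,
          Category.assoc]
      hcomm := fun φ => by
        rw [← Category.assoc, f.hcomm φ, Category.assoc, g.hcomm φ, ← Category.assoc] }
  id_comp f := UModHom.ext' (by funext x; exact Category.id_comp _)
  comp_id f := UModHom.ext' (by funext x; exact Category.comp_id _)
  assoc f g h := UModHom.ext' (by funext x; exact Category.assoc _ _ _)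

variable (𝒰)

/-- Evaluation of a `𝒰`-module at a vertex `x`. -/
def ev (x : Q) : UMod 𝒰 ⥤ (𝒰.obj x).Algebra where
  obj M := M.pt x
  map f := { f := f.app x, h := f.halg x }
  map_id _ := rfl
  map_comp _ _ := rfl

variable {𝒰}

/-- The structure morphism of a module, as a morphism `pt x ⟶ φ_* (pt y)` of
Eilenberg-Moore algebras. -/
def UMod.trHom (M : UMod 𝒰) {x y : Q} (φ : x ⟶ y) :
    M.pt x ⟶ (Monad.algebraFunctorOfMonadHom (𝒰.map φ)).obj (M.pt y) :=
  { f := M.tr φ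
    h := M.compat φ }

/-- `M` is cartesian at the edge `φ : x ⟶ y` if the structure morphism
`pt x ⟶ φ_* (pt y)` is a universal arrow; equivalently the adjoint transpose
`φ^* (pt x) ⟶ pt y` is an isomorphism. -/
def IsCartesianAt (M : UMod 𝒰) {x y : Q} (φ : x ⟶ y) : Prop :=
  ∀ (N : (𝒰.obj y).Algebra) (g : M.pt x ⟶ (Monad.algebraFunctorOfMonadHom (𝒰.map φ)).obj N),
    ∃! h : M.pt y ⟶ N,
      M.trHom φ ≫ (Monad.algebraFunctorOfMonadHom (𝒰.map φ)).map h = g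

end MonadQuiver

/-- `P` together with `η : M ⟶ φ_* P` is a reflection of `M` along restriction of
scalars, i.e. `η` exhibits `P` as `φ^* M`. -/
def IsExtension {T₁ T₂ : Monad C} (φ : T₁ ⟶ T₂) (M : T₁.Algebra) (P : T₂.Algebra)
    (η : M ⟶ (Monad.algebraFunctorOfMonadHom φ).obj P) : Prop :=
  ∀ (N : T₂.Algebra) (g : M ⟶ (Monad.algebraFunctorOfMonadHom φ).obj N),
    ∃! h : P ⟶ N, η ≫ (Monad.algebraFunctorOfMonadHom φ).map h = g

/-- A monad morphism `φ` is flat if the left adjoint `φ^*` of the restriction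
functor `φ_*` is exact. -/
def IsFlatMonadHom {T₁ T₂ : Monad C} (φ : T₁ ⟶ T₂) : Prop :=
  ∀ (L : T₁.Algebra ⥤ T₂.Algebra),
    Nonempty (L ⊣ Monad.algebraFunctorOfMonadHom φ) → PreservesFiniteLimits L

/-- every element `x : G ⟶ M` of a `U`-module `M` is contained in a
submodule `N_x ⊆ M` of norm at most `λ^U` (Proposition 3.4). -/
theorem exists_small_submodule_of_element {C : Type u} [Category.{v} C]
    [Abelian C] [HasColimits C] [AB5 C]
    (G : C) (hG : IsSeparator G) (hGp : Projective G)
    (κG : Cardinal.{v}) (hreg : κG.IsRegular) (hpres : IsPresentable κG G)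
    (T : Monad C) [PreservesFiniteLimits T.toFunctor] [PreservesColimits T.toFunctor]
    (M : T.Algebra) (x : G ⟶ M.A) :
    ∃ (N : T.Algebra) (i : N ⟶ M), Mono i ∧
      Cardinal.mk (G ⟶ N.A) ≤ Cardinal.mk (G ⟶ T.toFunctor.obj G) ^ κG * κG ^ κG ∧
      ∃ x' : G ⟶ N.A, x' ≫ i.f = x := by
  classical
  -- the adjoint morphism `TG ⟶ M`
  set e : T.toFunctor.obj G ⟶ M.A := T.toFunctor.map x ≫ M.a with he
  -- image factorization in `C`
  set I : C := Abelian.image e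
  set p : T.toFunctor.obj G ⟶ I := Abelian.factorThruImage e
  set ι : I ⟶ M.A := Abelian.image.ι e
  have hfac : p ≫ ι = e := Abelian.image.fac e
  have hmonoι : Mono ι := inferInstance
  -- key algebra-morphism identity for `e`
  have healg : T.toFunctor.map e ≫ M.a = T.μ.app G ≫ e := by
    have hnat := T.μ.naturality x
    simp only [Functor.comp_map] at hnat
    rw [he, Functor.map_comp, Category.assoc, ← M.assoc, ← Category.assoc, hnat,
      Category.assoc]
  -- lifting square
  have hsq : CommSq (T.μ.app G ≫ p) (T.toFunctor.map p) ι (T.toFunctor.map ι ≫ M.a) := by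
    constructor
    rw [Category.assoc, hfac, ← healg, ← Category.assoc, ← Functor.map_comp, hfac]
  have hepi : Epi (T.toFunctor.map p) := T.toFunctor.map_epi p
  have hstrong : StrongEpi (T.toFunctor.map p) := strongEpi_of_epi _
  have hlift : HasLiftingProperty (T.toFunctor.map p) ι := hstrong.llp ι
  -- algebra structure on `I`
  set a : T.toFunctor.obj I ⟶ I := hsq.lift with ha
  have ha1 : T.toFunctor.map p ≫ a = T.μ.app G ≫ p := hsq.fac_left
  have ha2 : a ≫ ι = T.toFunctor.map ι ≫ M.a := hsq.fac_right
  have hunit : T.η.app I ≫ a = 𝟙 I := by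
    have hnat := T.η.naturality ι
    simp only [Functor.id_map] at hnat
    rw [← cancel_mono ι, Category.assoc, ha2, ← Category.assoc, ← hnat,
      Category.assoc, M.unit]
    simp
  have hassoc : T.toFunctor.map a ≫ a = T.μ.app I ≫ a := by
    have hnat := T.μ.naturality ι
    simp only [Functor.comp_map] at hnat
    rw [← cancel_mono ι, Category.assoc, Category.assoc, ha2, ← Category.assoc,
      ← Functor.map_comp, ha2, Functor.map_comp, Category.assoc, ← M.assoc,
      ← Category.assoc (T.toFunctor.map (T.toFunctor.map ι)), hnat, Category.assoc]
  refine ⟨⟨I, a, hunit, hassoc.symm⟩, ⟨ι, ha2.symm⟩, ?_, ?_, ?_⟩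
  · -- mono in the algebra category
    constructor
    intro Z f g hfg
    apply Monad.Algebra.Hom.ext
    have : f.f ≫ ι = g.f ≫ ι := congrArg Monad.Algebra.Hom.f hfg
    exact (cancel_mono ι).mp this
  · -- cardinality bound
    have hsurj : Function.Surjective (fun (u : G ⟶ T.toFunctor.obj G) => u ≫ p) := by
      intro v
      have hp : Epi p := inferInstance
      obtain ⟨u, hu⟩ := Projective.factors v p
      exact ⟨u, hu⟩
    have h1 : Cardinal.mk (G ⟶ I) ≤ Cardinal.mk (G ⟶ T.toFunctor.obj G) :=
      Cardinal.mk_le_of_surjective hsurj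
    have hne : Cardinal.mk (G ⟶ T.toFunctor.obj G) ≠ 0 := by
      exact Cardinal.mk_ne_zero_iff.mpr ⟨0⟩
    have h2 : Cardinal.mk (G ⟶ T.toFunctor.obj G) ≤
        Cardinal.mk (G ⟶ T.toFunctor.obj G) ^ κG := by
      conv_lhs => rw [← Cardinal.power_one (Cardinal.mk (G ⟶ T.toFunctor.obj G))]
      exact Cardinal.power_le_power_left hne (le_trans (le_of_lt Cardinal.one_lt_aleph0)
        hreg.aleph0_le)
    have h3 : (1 : Cardinal) ≤ κG ^ κG :=
      Cardinal.one_le_iff_ne_zero.mpr (Cardinal.power_ne_zero _ hreg.pos.ne')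
    calc Cardinal.mk (G ⟶ I) ≤ Cardinal.mk (G ⟶ T.toFunctor.obj G) ^ κG :=
          le_trans h1 h2
      _ = Cardinal.mk (G ⟶ T.toFunctor.obj G) ^ κG * 1 := (mul_one _).symm
      _ ≤ Cardinal.mk (G ⟶ T.toFunctor.obj G) ^ κG * κG ^ κG :=
          mul_le_mul_right h3 _
  · -- the factorization of `x`
    refine ⟨T.η.app G ≫ p, ?_⟩
    show (T.η.app G ≫ p) ≫ ι = x
    have hnat := T.η.naturality x
    simp only [Functor.id_map] at hnat
    rw [Category.assoc, hfac, he, ← Category.assoc, ← hnat, Category.assoc, M.unit]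
    simp

end Paper
end

section
/- Let Q be a poset and 𝒰 : Q → Mnd(C) a monad quiver valued in exact colimit-preserving monads, and x ∈ Q. Define coe_x : EM_{𝒰_x} → Mod-𝒰 by (coe_x M)_y = ψ_* M if there is ψ ∈ Q(y,x), and 0 otherwise. Then coe_x is right adjoint to the evaluation functor ev_x : Mod-𝒰 → EM_{𝒰_x}. -/
open CategoryTheory CategoryTheory.Limits Opposite

universe w v u u₂ v₂

namespace Paper

variable {C : Type u} [Category.{v} C]

section CoeConstruction

open ZeroObject

set_option linter.unusedSectionVars false

variable {C : Type u} [Category.{v} C] [Abelian C]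

/-- The zero algebra over a monad. -/
noncomputable def zeroAlg (T : Monad C) : T.Algebra where
  A := 0
  a := 0
  unit := (isZero_zero C).eq_of_tgt _ _
  assoc := (isZero_zero C).eq_of_tgt _ _

theorem isZero_zeroAlg (T : Monad C) (hT : IsZero (T.toFunctor.obj 0)) :
    IsZero (zeroAlg T) := by
  refine ⟨fun N => ⟨⟨⟨⟨(0 : (0 : C) ⟶ N.A), ?_⟩⟩, ?_⟩⟩, fun N => ⟨⟨⟨⟨(0 : N.A ⟶ (0 : C)), ?_⟩⟩, ?_⟩⟩⟩
  · exact hT.eq_of_src _ _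
  · intro g
    apply Monad.Algebra.Hom.ext
    exact (isZero_zero C).eq_of_src _ _
  · exact (isZero_zero C).eq_of_tgt _ _
  · intro g
    apply Monad.Algebra.Hom.ext
    exact (isZero_zero C).eq_of_tgt _ _

variable {Q : Type v} [PartialOrder Q] (𝒰 : Q ⥤ Monad C) (x : Q)

/-- Restriction of scalars along an inequality. -/
abbrev resF {y : Q} (h : y ≤ x) : (𝒰.obj x).Algebra ⥤ (𝒰.obj y).Algebra :=
  Monad.algebraFunctorOfMonadHom (𝒰.map (homOfLE h))

open Classical in
/-- The value of `coe_x M` at `y`. -/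
noncomputable def coePt (M : (𝒰.obj x).Algebra) (y : Q) : (𝒰.obj y).Algebra :=
  if h : y ≤ x then (resF 𝒰 x h).obj M else zeroAlg (𝒰.obj y)

theorem coePt_pos (M : (𝒰.obj x).Algebra) {y : Q} (h : y ≤ x) :
    coePt 𝒰 x M y = (resF 𝒰 x h).obj M := dif_pos h

theorem coePt_neg (M : (𝒰.obj x).Algebra) {y : Q} (h : ¬ y ≤ x) :
    coePt 𝒰 x M y = zeroAlg (𝒰.obj y) := dif_neg h

/-- Iso on the downset. -/
noncomputable def coeIso (M : (𝒰.obj x).Algebra) {y : Q} (h : y ≤ x) :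
    coePt 𝒰 x M y ≅ (resF 𝒰 x h).obj M := eqToIso (coePt_pos 𝒰 x M h)

theorem coePt_isZero_A (M : (𝒰.obj x).Algebra) {y : Q} (h : ¬ y ≤ x) :
    IsZero ((coePt 𝒰 x M y).A) := by
  rw [coePt_neg 𝒰 x M h]
  exact isZero_zero C

open Classical in
/-- The structure map of `coe_x M`. -/
noncomputable def coeTr (M : (𝒰.obj x).Algebra) {y z : Q} (φ : y ⟶ z) :
    (coePt 𝒰 x M y).A ⟶ (coePt 𝒰 x M z).A :=
  if hz : z ≤ x then
    (coeIso 𝒰 x M ((leOfHom φ).trans hz)).hom.f ≫ (coeIso 𝒰 x M hz).inv.f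
  else 0

theorem coeTr_pos (M : (𝒰.obj x).Algebra) {y z : Q} (φ : y ⟶ z) (hz : z ≤ x) :
    coeTr 𝒰 x M φ =
      (coeIso 𝒰 x M ((leOfHom φ).trans hz)).hom.f ≫ (coeIso 𝒰 x M hz).inv.f := by
  unfold coeTr; exact dif_pos hz

theorem coe_compat (M : (𝒰.obj x).Algebra) {y z : Q} (φ : y ⟶ z) :
    (𝒰.obj y).toFunctor.map (coeTr 𝒰 x M φ) ≫
      ((𝒰.map φ).app (coePt 𝒰 x M z).A ≫ (coePt 𝒰 x M z).a) =
    (coePt 𝒰 x M y).a ≫ coeTr 𝒰 x M φ := by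
  by_cases hz : z ≤ x
  · have hy : y ≤ x := (leOfHom φ).trans hz
    have heq : 𝒰.map (homOfLE hy) = 𝒰.map φ ≫ 𝒰.map (homOfLE hz) := by
      rw [← 𝒰.map_comp]
      congr 1
    let q : coePt 𝒰 x M y ⟶
        (Monad.algebraFunctorOfMonadHom (𝒰.map φ)).obj (coePt 𝒰 x M z) :=
      (coeIso 𝒰 x M hy).hom ≫
        (Monad.algebraFunctorOfMonadHomEq heq).hom.app M ≫
        (Monad.algebraFunctorOfMonadHomComp (𝒰.map φ) (𝒰.map (homOfLE hz))).hom.app M ≫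
        (Monad.algebraFunctorOfMonadHom (𝒰.map φ)).map (coeIso 𝒰 x M hz).inv
    have hqf : q.f = coeTr 𝒰 x M φ := by
      rw [coeTr_pos 𝒰 x M φ hz]
      simp [q]
      erw [Category.id_comp, Category.id_comp]
      rfl
    have := q.h
    rw [hqf] at this
    exact this
  · exact (coePt_isZero_A 𝒰 x M hz).eq_of_tgt _ _

theorem coeTr_id (M : (𝒰.obj x).Algebra) (y : Q) :
    coeTr 𝒰 x M (𝟙 y) = 𝟙 (coePt 𝒰 x M y).A := by
  by_cases hy : y ≤ x
  · rw [coeTr_pos 𝒰 x M _ hy, ← Monad.Algebra.comp_f, Iso.hom_inv_id,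
      Monad.Algebra.id_f]
  · exact (coePt_isZero_A 𝒰 x M hy).eq_of_tgt _ _

theorem coeTr_comp (M : (𝒰.obj x).Algebra) {y z w : Q} (φ : y ⟶ z) (ψ : z ⟶ w) :
    coeTr 𝒰 x M (φ ≫ ψ) = coeTr 𝒰 x M φ ≫ coeTr 𝒰 x M ψ := by
  by_cases hw : w ≤ x
  · have hz : z ≤ x := (leOfHom ψ).trans hw
    rw [coeTr_pos 𝒰 x M _ hw, coeTr_pos 𝒰 x M φ hz, coeTr_pos 𝒰 x M ψ hw]
    symm
    exact (Category.assoc _ _ _).trans (whisker_eq _ ((Category.assoc _ _ _).symm.trans ((eq_whisker (congrArg Monad.Algebra.Hom.f (coeIso 𝒰 x M hz).inv_hom_id) _).trans (Category.id_comp _))))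
  · exact (coePt_isZero_A 𝒰 x M (fun h => hw h) |>.eq_of_tgt _ _)

/-- `coe_x M` as a `𝒰`-module. -/
noncomputable def coeObj (M : (𝒰.obj x).Algebra) : UMod 𝒰 where
  pt := coePt 𝒰 x M
  tr := coeTr 𝒰 x M
  compat := coe_compat 𝒰 x M
  tr_id := coeTr_id 𝒰 x M
  tr_comp := coeTr_comp 𝒰 x M

open Classical in
/-- Functoriality of `coe_x`. -/
noncomputable def coeMapHom {M N : (𝒰.obj x).Algebra} (f : M ⟶ N) (y : Q) :
    coePt 𝒰 x M y ⟶ coePt 𝒰 x N y :=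
  if hy : y ≤ x then
    (coeIso 𝒰 x M hy).hom ≫ (resF 𝒰 x hy).map f ≫ (coeIso 𝒰 x N hy).inv
  else { f := 0, h := (coePt_isZero_A 𝒰 x N hy).eq_of_tgt _ _ }

theorem coeMapHom_pos {M N : (𝒰.obj x).Algebra} (f : M ⟶ N) {y : Q} (hy : y ≤ x) :
    coeMapHom 𝒰 x f y =
      (coeIso 𝒰 x M hy).hom ≫ (resF 𝒰 x hy).map f ≫ (coeIso 𝒰 x N hy).inv := by
  unfold coeMapHom; exact dif_pos hy

theorem algIso_hom_inv_f_assoc {T : Monad C} {A B : T.Algebra} (i : A ≅ B) {Z : C}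
    (g : A.A ⟶ Z) : i.hom.f ≫ i.inv.f ≫ g = g := by
  rw [← Category.assoc, ← Monad.Algebra.comp_f, Iso.hom_inv_id, Monad.Algebra.id_f,
    Category.id_comp]

theorem algIso_inv_hom_f_assoc {T : Monad C} {A B : T.Algebra} (i : A ≅ B) {Z : C}
    (g : B.A ⟶ Z) : i.inv.f ≫ i.hom.f ≫ g = g := by
  rw [← Category.assoc, ← Monad.Algebra.comp_f, Iso.inv_hom_id, Monad.Algebra.id_f,
    Category.id_comp]

theorem coeMapHom_hcomm {M N : (𝒰.obj x).Algebra} (f : M ⟶ N) {y z : Q} (φ : y ⟶ z) :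
    coeTr 𝒰 x M φ ≫ (coeMapHom 𝒰 x f z).f = (coeMapHom 𝒰 x f y).f ≫ coeTr 𝒰 x N φ := by
  by_cases hz : z ≤ x
  · have hy : y ≤ x := (leOfHom φ).trans hz
    rw [coeTr_pos 𝒰 x M φ hz, coeTr_pos 𝒰 x N φ hz, coeMapHom_pos 𝒰 x f hz,
      coeMapHom_pos 𝒰 x f hy]
    simp only [Monad.Algebra.comp_f, Category.assoc]
    erw [algIso_inv_hom_f_assoc]
    have h1 : coeIso 𝒰 x N hy = coeIso 𝒰 x N ((leOfHom φ).trans hz) := rfl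
    have h2 : coeIso 𝒰 x M ((leOfHom φ).trans hz) = coeIso 𝒰 x M hy := rfl
    exact (Category.assoc _ _ _).trans (whisker_eq _ (algIso_inv_hom_f_assoc _ _))
  · exact (coePt_isZero_A 𝒰 x N hz).eq_of_tgt _ _

/-- `coe_x` as a functor. -/
noncomputable def coeFunctor : (𝒰.obj x).Algebra ⥤ UMod 𝒰 where
  obj M := coeObj 𝒰 x M
  map f :=
    { app := fun y => (coeMapHom 𝒰 x f y).f
      halg := fun y => (coeMapHom 𝒰 x f y).h
      hcomm := fun φ => coeMapHom_hcomm 𝒰 x f φ }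
  map_id M := UModHom.ext' (by
    funext y
    show (coeMapHom 𝒰 x (𝟙 M) y).f = 𝟙 (coePt 𝒰 x M y).A
    by_cases hy : y ≤ x
    · rw [coeMapHom_pos 𝒰 x (𝟙 M) hy]
      simp
    · exact (coePt_isZero_A 𝒰 x M hy).eq_of_tgt _ _)
  map_comp f g := UModHom.ext' (by
    funext y
    show (coeMapHom 𝒰 x (f ≫ g) y).f = (coeMapHom 𝒰 x f y).f ≫ (coeMapHom 𝒰 x g y).f
    by_cases hy : y ≤ x
    · rw [coeMapHom_pos 𝒰 x (f ≫ g) hy, coeMapHom_pos 𝒰 x f hy, coeMapHom_pos 𝒰 x g hy]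
      simp only [Monad.Algebra.comp_f, Functor.map_comp, Category.assoc]
      congr 2
      rw [algIso_inv_hom_f_assoc]
    · exact (coePt_isZero_A 𝒰 x _ hy).eq_of_tgt _ _)

open Classical in
/-- Transpose of a morphism along the adjunction `ev_x ⊣ coe_x`. -/
noncomputable def coeTranspose {M' : UMod 𝒰} {M : (𝒰.obj x).Algebra}
    (g : M'.pt x ⟶ M) (y : Q) : M'.pt y ⟶ coePt 𝒰 x M y :=
  if hy : y ≤ x then
    M'.trHom (homOfLE hy) ≫ (resF 𝒰 x hy).map g ≫ (coeIso 𝒰 x M hy).inv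
  else { f := 0, h := (coePt_isZero_A 𝒰 x M hy).eq_of_tgt _ _ }

theorem coeTranspose_pos {M' : UMod 𝒰} {M : (𝒰.obj x).Algebra}
    (g : M'.pt x ⟶ M) {y : Q} (hy : y ≤ x) :
    coeTranspose 𝒰 x g y =
      M'.trHom (homOfLE hy) ≫ (resF 𝒰 x hy).map g ≫ (coeIso 𝒰 x M hy).inv := by
  unfold coeTranspose; exact dif_pos hy

theorem res_refl_a (M : (𝒰.obj x).Algebra) :
    ((resF 𝒰 x (le_refl x)).obj M).a = M.a := by
  have : homOfLE (le_refl x) = 𝟙 x := rfl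
  simp [this]
  rfl


theorem algIso_hom_inv_f {T : Monad C} {A B : T.Algebra} (i : A ≅ B) :
    i.hom.f ≫ i.inv.f = 𝟙 A.A := by
  rw [← Monad.Algebra.comp_f, Iso.hom_inv_id, Monad.Algebra.id_f]

theorem algIso_inv_hom_f {T : Monad C} {A B : T.Algebra} (i : A ≅ B) :
    i.inv.f ≫ i.hom.f = 𝟙 B.A := by
  rw [← Monad.Algebra.comp_f, Iso.inv_hom_id, Monad.Algebra.id_f]

theorem coeTranspose_hcomm {M' : UMod 𝒰} {M : (𝒰.obj x).Algebra}
    (g : M'.pt x ⟶ M) {y z : Q} (φ : y ⟶ z) :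
    M'.tr φ ≫ (coeTranspose 𝒰 x g z).f = (coeTranspose 𝒰 x g y).f ≫ coeTr 𝒰 x M φ := by
  by_cases hz : z ≤ x
  · have hy : y ≤ x := (leOfHom φ).trans hz
    rw [coeTranspose_pos 𝒰 x g hz, coeTranspose_pos 𝒰 x g hy, coeTr_pos 𝒰 x M φ hz]
    simp only [Monad.Algebra.comp_f, Category.assoc, UMod.trHom,
      Monad.algebraFunctorOfMonadHom_map_f]
    have h1 : M'.tr φ ≫ M'.tr (homOfLE hz) = M'.tr (homOfLE hy) := by
      rw [← M'.tr_comp]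
      congr 1
    have h2 : coeIso 𝒰 x M ((leOfHom φ).trans hz) = coeIso 𝒰 x M hy := rfl
    erw [← Category.assoc (M'.tr φ), h1, h2]
    symm
    exact (Category.assoc _ _ _).trans (whisker_eq _ ((Category.assoc _ _ _).trans (whisker_eq _ (algIso_inv_hom_f_assoc _ _))))
  · exact (coePt_isZero_A 𝒰 x M hz).eq_of_tgt _ _

/-- The hom-set bijection of the adjunction `ev_x ⊣ coe_x`. -/
noncomputable def coeHomEquiv (M' : UMod 𝒰) (M : (𝒰.obj x).Algebra) :
    ((ev 𝒰 x).obj M' ⟶ M) ≃ (M' ⟶ (coeFunctor 𝒰 x).obj M) where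
  toFun g :=
    { app := fun y => (coeTranspose 𝒰 x g y).f
      halg := fun y => (coeTranspose 𝒰 x g y).h
      hcomm := fun φ => coeTranspose_hcomm 𝒰 x g φ }
  invFun h :=
    { f := h.app x ≫ (coeIso 𝒰 x M (le_refl x)).hom.f
      h := by
        have k1 : (𝒰.obj x).toFunctor.map (h.app x) ≫ (coePt 𝒰 x M x).a =
            (M'.pt x).a ≫ h.app x := h.halg x
        have k2 := (coeIso 𝒰 x M (le_refl x)).hom.h
        rw [res_refl_a] at k2
        show (𝒰.obj x).toFunctor.map (h.app x ≫ (coeIso 𝒰 x M (le_refl x)).hom.f) ≫ M.a =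
          (M'.pt x).a ≫ h.app x ≫ (coeIso 𝒰 x M (le_refl x)).hom.f
        erw [Functor.map_comp, Category.assoc, k2, ← Category.assoc, k1, Category.assoc]
        rfl }
  left_inv g := by
    apply Monad.Algebra.Hom.ext
    show (coeTranspose 𝒰 x g x).f ≫ (coeIso 𝒰 x M (le_refl x)).hom.f = g.f
    rw [coeTranspose_pos 𝒰 x g (le_refl x)]
    simp only [Monad.Algebra.comp_f, Category.assoc, UMod.trHom,
      Monad.algebraFunctorOfMonadHom_map_f]
    rw [show (homOfLE (le_refl x) : x ⟶ x) = 𝟙 x from rfl, M'.tr_id]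
    exact (Category.assoc _ _ _).trans ((Category.id_comp _).trans ((Category.assoc _ _ _).trans ((whisker_eq _ (algIso_inv_hom_f _)).trans (Category.comp_id _))))
  right_inv h := by
    apply UModHom.ext'
    funext y
    by_cases hy : y ≤ x
    · show (coeTranspose 𝒰 x _ y).f = h.app y
      erw [coeTranspose_pos 𝒰 x _ hy]
      simp only [Monad.Algebra.comp_f, Category.assoc, UMod.trHom,
        Monad.algebraFunctorOfMonadHom_map_f]
      have k := h.hcomm (homOfLE hy)
      have hk : (((coeFunctor 𝒰 x).obj M).tr (homOfLE hy) : _) =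
          (coeIso 𝒰 x M hy).hom.f ≫ (coeIso 𝒰 x M (le_refl x)).inv.f := by
        rw [show (((coeFunctor 𝒰 x).obj M).tr (homOfLE hy) : _) =
          coeTr 𝒰 x M (homOfLE hy) from rfl, coeTr_pos 𝒰 x M _ (le_refl x)]
      rw [hk] at k
      refine (whisker_eq _ (Category.assoc (h.app x) _ _)).trans ?_
      refine (Category.assoc _ _ _).symm.trans ?_
      refine (eq_whisker k _).trans ?_
      refine ((Category.assoc _ _ _).trans (whisker_eq _ ?_)).trans (Category.comp_id _)
      refine (Category.assoc _ _ _).trans ((whisker_eq _ (algIso_inv_hom_f_assoc (coeIso 𝒰 x M (le_refl x)) _)).trans ?_)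
      exact algIso_hom_inv_f _
    · exact ((coePt_isZero_A 𝒰 x M hy).eq_of_tgt _ _)

/-- The adjunction `ev_x ⊣ coe_x`. -/
noncomputable def coeAdj : ev 𝒰 x ⊣ coeFunctor 𝒰 x :=
  Adjunction.mkOfHomEquiv
    { homEquiv := fun M' M => coeHomEquiv 𝒰 x M' M
      homEquiv_naturality_left_symm := fun f g => by
        apply Monad.Algebra.Hom.ext
        show (f ≫ g).app x ≫ (coeIso 𝒰 x _ (le_refl x)).hom.f =
          f.app x ≫ g.app x ≫ (coeIso 𝒰 x _ (le_refl x)).hom.f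
        rw [show (f ≫ g).app x = f.app x ≫ g.app x from rfl]
        exact Category.assoc _ _ _
      homEquiv_naturality_right := fun {M' M M''} f g => by
        apply UModHom.ext'
        funext y
        by_cases hy : y ≤ x
        · show (coeTranspose 𝒰 x (f ≫ g) y).f =
            (coeTranspose 𝒰 x f y).f ≫ (coeMapHom 𝒰 x g y).f
          rw [coeTranspose_pos 𝒰 x (f ≫ g) hy, coeTranspose_pos 𝒰 x f hy,
            coeMapHom_pos 𝒰 x g hy]
          simp only [Monad.Algebra.comp_f, Category.assoc, UMod.trHom,
            Monad.algebraFunctorOfMonadHom_map_f, Functor.map_comp]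
          symm
          refine (Category.assoc _ _ _).trans (whisker_eq _ ?_)
          refine ((Category.assoc _ _ _).trans (whisker_eq _ (algIso_inv_hom_f_assoc _ _))).trans ?_
          exact (Category.assoc _ _ _).symm
        · exact (coePt_isZero_A 𝒰 x M'' hy).eq_of_tgt _ _ }

theorem coePt_isZero (M : (𝒰.obj x).Algebra) {y : Q} (hy : ¬ y ≤ x)
    (hpl : PreservesFiniteLimits (𝒰.obj y).toFunctor) : IsZero (coePt 𝒰 x M y) := by
  have hT : IsZero ((𝒰.obj y).toFunctor.obj 0) := by
    haveI := hpl
    exact (((isZero_zero C).isTerminal).isTerminalObj (𝒰.obj y).toFunctor 0).isZero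
  rw [coePt_neg 𝒰 x M hy]
  exact isZero_zeroAlg _ hT

end CoeConstruction

/-- for a poset `Q`, the evaluation functor `ev_x` admits a right
adjoint `coe_x` which vanishes outside the downset of `x` and is given by the
restriction `ψ_*` on it (Proposition 5.2). -/
theorem exists_right_adjoint_of_ev {C : Type u} [Category.{v} C]
    [Abelian C] [HasColimits C] [AB5 C]
    (G : C) (hG : IsSeparator G) (hGp : Projective G)
    {Q : Type v} [PartialOrder Q] (𝒰 : Q ⥤ Monad C)
    (hU : ∀ x : Q,
      PreservesFiniteLimits (𝒰.obj x).toFunctor ∧ PreservesColimits (𝒰.obj x).toFunctor)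
    (x : Q) :
    ∃ (R : (𝒰.obj x).Algebra ⥤ UMod 𝒰), Nonempty (ev 𝒰 x ⊣ R) ∧
      ∀ (M : (𝒰.obj x).Algebra) (y : Q),
        (¬ y ≤ x → IsZero ((R.obj M).pt y)) ∧
        ∀ h : y ≤ x,
          Nonempty ((R.obj M).pt y ≅
            (Monad.algebraFunctorOfMonadHom (𝒰.map (homOfLE h))).obj M) := by
  refine ⟨coeFunctor 𝒰 x, ⟨coeAdj 𝒰 x⟩, fun M y => ⟨?_, ?_⟩⟩
  · intro hy
    exact coePt_isZero 𝒰 x M hy (hU y).1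
  · intro h
    exact ⟨coeIso 𝒰 x M h⟩

end Paper
end
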